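/- Two-factor merging identity for the maps Φ_j: Fix p ∈ ℕ and complex numbers x_1, …, x_{p−1}, y_1, …, y_{p−1}. Then ∑_{(a,b): a,b ≥ 1, a+b = p} ∑_{α=1}^{a} ∑_{β=1}^{b} (1/(α! β!)) · Φ_α[z^a](x_1,…,x_α) · Φ_β[z^b](y_1,…,y_β) = ∑_{α ≥ 1} ∑_{β ≥ 1} (1/(α! β!)) · Φ_{α+β}[z^p](x_1,…,x_α, y_1,…,y_β), where the sums on the right-hand side terminate because Φ_{α+β}[z^p] = 0 whenever α+β > p. -/

import Mathlib

open Finset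

/-- Compositions of `m` into `j` positive parts. -/
def compositions (j m : ℕ) : Finset (Fin j → ℕ) :=
  (Finset.Nat.antidiagonalTuple j m).filter fun k => ∀ i, 1 ≤ k i

/-- `Phi j m x = Φ_j[z^m](x₁, …, x_j) = ∑_{l₁+⋯+l_j = m, lᵢ ≥ 1} ∏ᵢ xᵢ^{lᵢ}/lᵢ`,
with `Φ_j[z^m] = 0` when `m < j` (the sum over compositions is then empty). -/
noncomputable def Phi (j m : ℕ) (x : ℕ → ℂ) : ℂ :=
  ∑ l ∈ compositions j m, ∏ i : Fin j, x (i : ℕ) ^ (l i) / (l i : ℂ)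

lemma mem_compositions {j m : ℕ} {k : Fin j → ℕ} :
    k ∈ compositions j m ↔ (∑ i, k i = m) ∧ ∀ i, 1 ≤ k i := by
  simp [compositions, Finset.Nat.mem_antidiagonalTuple]

lemma Phi_eq_zero {j m : ℕ} (h : m < j) (x : ℕ → ℂ) : Phi j m x = 0 := by
  have : compositions j m = ∅ := by
    ext k
    simp only [mem_compositions, Finset.notMem_empty, iff_false, not_and]
    intro hs hk
    have : (j : ℕ) ≤ m := by
      calc j = ∑ _i : Fin j, 1 := by simp
      _ ≤ ∑ i, k i := Finset.sum_le_sum fun i _ => hk i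
      _ = m := hs
    omega
  simp [Phi, this]

lemma Phi_split (α β p : ℕ) (x y : ℕ → ℂ) :
    Phi (α + β) p (fun i => if i < α then x i else y (i - α)) =
    ∑ ab ∈ Finset.HasAntidiagonal.antidiagonal p, Phi α ab.1 x * Phi β ab.2 y := by
  unfold Phi
  simp_rw [Finset.sum_mul_sum, ← Finset.sum_product']
  rw [Finset.sum_sigma']
  refine Finset.sum_nbij'
    (fun l => (⟨(∑ i : Fin α, l (Fin.castAdd β i), ∑ i : Fin β, l (Fin.natAdd α i)),
      (fun i => l (Fin.castAdd β i), fun i => l (Fin.natAdd α i))⟩ :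
      (_ : ℕ × ℕ) × (Fin α → ℕ) × (Fin β → ℕ)))
    (fun z => Fin.append z.2.1 z.2.2) ?_ ?_ ?_ ?_ ?_
  · intro l hl
    rw [mem_compositions] at hl
    refine Finset.mem_sigma.2 ⟨Finset.HasAntidiagonal.mem_antidiagonal.2 ?_,
      Finset.mem_product.2 ⟨mem_compositions.2 ⟨rfl, fun i => hl.2 _⟩,
        mem_compositions.2 ⟨rfl, fun i => hl.2 _⟩⟩⟩
    rw [← Fin.sum_univ_add]
    exact hl.1
  · intro z hz
    simp only [Finset.mem_sigma, Finset.HasAntidiagonal.mem_antidiagonal, Finset.mem_product,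
      mem_compositions] at hz
    rw [mem_compositions]
    constructor
    · rw [Fin.sum_univ_add]
      simp only [Fin.append_left, Fin.append_right]
      rw [hz.2.1.1, hz.2.2.1, hz.1]
    · intro i
      refine Fin.addCases (fun i => ?_) (fun i => ?_) i
      · rw [Fin.append_left]; exact hz.2.1.2 i
      · rw [Fin.append_right]; exact hz.2.2.2 i
  · intro l hl
    funext i
    refine Fin.addCases (fun i => ?_) (fun i => ?_) i
    · exact Fin.append_left _ _ _
    · exact Fin.append_right _ _ _
  · intro z hz
    rcases z with ⟨⟨a, b⟩, l1, l2⟩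
    simp only [Finset.mem_sigma, Finset.HasAntidiagonal.mem_antidiagonal, Finset.mem_product,
      mem_compositions] at hz
    have hA : (∑ i : Fin α, Fin.append l1 l2 (Fin.castAdd β i)) = a := by
      simp only [Fin.append_left]; exact hz.2.1.1
    have hB : (∑ i : Fin β, Fin.append l1 l2 (Fin.natAdd α i)) = b := by
      simp only [Fin.append_right]; exact hz.2.2.1
    simp only [hA, hB]
    exact congrArg _ (Prod.ext (funext fun i => Fin.append_left _ _ _)
      (funext fun i => Fin.append_right _ _ _))
  · intro l hl
    rw [Fin.prod_univ_add]
    congr 1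
    · refine Finset.prod_congr rfl fun i _ => ?_
      have h1 : ((Fin.castAdd β i : Fin (α + β)) : ℕ) = (i : ℕ) := rfl
      rw [h1]
      simp [i.isLt]
    · refine Finset.prod_congr rfl fun i _ => ?_
      have h1 : ((Fin.natAdd α i : Fin (α + β)) : ℕ) = α + (i : ℕ) := rfl
      rw [h1]
      simp

lemma aux_antidiag (p : ℕ) (g : ℕ → ℕ → ℂ) (h0 : ∀ a, g a 0 = 0) (h0' : ∀ b, g 0 b = 0) :
    ∑ ab ∈ Finset.HasAntidiagonal.antidiagonal p, g ab.1 ab.2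
    = ∑ a ∈ Finset.Icc 1 p, ∑ b ∈ Finset.Icc 1 p, if a + b = p then g a b else 0 := by
  rw [← Finset.sum_product']
  rw [← Finset.sum_filter]
  refine (Finset.sum_subset ?_ ?_).symm
  · intro ab hab
    simp only [Finset.mem_filter, Finset.mem_product, Finset.mem_Icc] at hab
    simpa using hab.2
  · intro ab hab hab'
    simp only [Finset.HasAntidiagonal.mem_antidiagonal] at hab
    simp only [Finset.mem_filter, Finset.mem_product, Finset.mem_Icc, not_and] at hab'
    rcases Nat.eq_zero_or_pos ab.1 with h | h
    · rw [← h0' ab.2, h]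
    · rcases Nat.eq_zero_or_pos ab.2 with h2 | h2
      · rw [← h0 ab.1, h2]
      · exfalso
        revert hab'
        simp only [Classical.not_imp, not_not, not_forall, not_le, not_lt, imp_false, not_and]
        omega

lemma sum_swap4 {s : Finset ℕ} (F : ℕ → ℕ → ℕ → ℕ → ℂ) :
    (∑ a ∈ s, ∑ b ∈ s, ∑ c ∈ s, ∑ d ∈ s, F a b c d)
    = ∑ c ∈ s, ∑ d ∈ s, ∑ a ∈ s, ∑ b ∈ s, F a b c d := by
  have h1 : ∀ (G : ℕ → ℕ → ℂ), (∑ u ∈ s, ∑ v ∈ s, G u v) = ∑ v ∈ s, ∑ u ∈ s, G u v :=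
    fun G => Finset.sum_comm
  calc (∑ a ∈ s, ∑ b ∈ s, ∑ c ∈ s, ∑ d ∈ s, F a b c d)
      = ∑ a ∈ s, ∑ c ∈ s, ∑ b ∈ s, ∑ d ∈ s, F a b c d :=
        Finset.sum_congr rfl fun a _ => h1 _
    _ = ∑ c ∈ s, ∑ a ∈ s, ∑ b ∈ s, ∑ d ∈ s, F a b c d := h1 _
    _ = ∑ c ∈ s, ∑ a ∈ s, ∑ d ∈ s, ∑ b ∈ s, F a b c d :=
        Finset.sum_congr rfl fun c _ => Finset.sum_congr rfl fun a _ => h1 _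
    _ = ∑ c ∈ s, ∑ d ∈ s, ∑ a ∈ s, ∑ b ∈ s, F a b c d :=
        Finset.sum_congr rfl fun c _ => h1 _

/-- Two-factor merging identity for the maps `Φ_j`.  On the right-hand side the
sums over `α, β ≥ 1` terminate (terms with `α+β > p` vanish since
`Φ_{α+β}[z^p] = 0`), so they are written as the equal finite sums up to `p`. -/
theorem phi_two_merge (p : ℕ) (x y : ℕ → ℂ) :
    ∑ a ∈ Finset.Icc 1 p, ∑ b ∈ Finset.Icc 1 p,
      (if a + b = p then
        ∑ α ∈ Finset.Icc 1 a, ∑ β ∈ Finset.Icc 1 b,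
          (1 / ((α.factorial : ℂ) * (β.factorial : ℂ))) * (Phi α a x * Phi β b y)
      else 0)
    = ∑ α ∈ Finset.Icc 1 p, ∑ β ∈ Finset.Icc 1 p,
        (1 / ((α.factorial : ℂ) * (β.factorial : ℂ))) *
          Phi (α + β) p (fun i => if i < α then x i else y (i - α)) := by
  have hL : (∑ a ∈ Finset.Icc 1 p, ∑ b ∈ Finset.Icc 1 p,
      (if a + b = p then
        ∑ α ∈ Finset.Icc 1 a, ∑ β ∈ Finset.Icc 1 b,
          (1 / ((α.factorial : ℂ) * (β.factorial : ℂ))) * (Phi α a x * Phi β b y)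
      else 0))
      = ∑ a ∈ Finset.Icc 1 p, ∑ b ∈ Finset.Icc 1 p, ∑ α ∈ Finset.Icc 1 p, ∑ β ∈ Finset.Icc 1 p,
        (if a + b = p then
          (1 / ((α.factorial : ℂ) * (β.factorial : ℂ))) * (Phi α a x * Phi β b y)
        else 0) := by
    refine Finset.sum_congr rfl fun a ha => Finset.sum_congr rfl fun b hb => ?_
    have hap : a ≤ p := (Finset.mem_Icc.1 ha).2
    have hbp : b ≤ p := (Finset.mem_Icc.1 hb).2
    split_ifs with h
    · calc (∑ α ∈ Finset.Icc 1 a, ∑ β ∈ Finset.Icc 1 b,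
            (1 / ((α.factorial : ℂ) * (β.factorial : ℂ))) * (Phi α a x * Phi β b y))
          = ∑ α ∈ Finset.Icc 1 p, ∑ β ∈ Finset.Icc 1 b,
            (1 / ((α.factorial : ℂ) * (β.factorial : ℂ))) * (Phi α a x * Phi β b y) := by
            refine Finset.sum_subset (Finset.Icc_subset_Icc_right hap) fun α hα hα' => ?_
            simp only [Finset.mem_Icc, not_and, not_le] at hα hα'
            have : a < α := hα' hα.1
            simp [Phi_eq_zero this]
        _ = _ := by
            refine Finset.sum_congr rfl fun α _ => ?_
            refine Finset.sum_subset (Finset.Icc_subset_Icc_right hbp) fun β hβ hβ' => ?_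
            simp only [Finset.mem_Icc, not_and, not_le] at hβ hβ'
            have : b < β := hβ' hβ.1
            simp [Phi_eq_zero this]
    · simp
  have hR : (∑ α ∈ Finset.Icc 1 p, ∑ β ∈ Finset.Icc 1 p,
      (1 / ((α.factorial : ℂ) * (β.factorial : ℂ))) *
        Phi (α + β) p (fun i => if i < α then x i else y (i - α)))
      = ∑ α ∈ Finset.Icc 1 p, ∑ β ∈ Finset.Icc 1 p, ∑ a ∈ Finset.Icc 1 p, ∑ b ∈ Finset.Icc 1 p,
        (if a + b = p then
          (1 / ((α.factorial : ℂ) * (β.factorial : ℂ))) * (Phi α a x * Phi β b y)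
        else 0) := by
    refine Finset.sum_congr rfl fun α hα => Finset.sum_congr rfl fun β hβ => ?_
    have hα1 : 1 ≤ α := (Finset.mem_Icc.1 hα).1
    have hβ1 : 1 ≤ β := (Finset.mem_Icc.1 hβ).1
    rw [Phi_split, aux_antidiag p (fun a b => Phi α a x * Phi β b y)
      (fun a => by simp [Phi_eq_zero (show (0:ℕ) < β from hβ1)])
      (fun b => by simp [Phi_eq_zero (show (0:ℕ) < α from hα1)])]
    simp_rw [Finset.mul_sum, mul_ite, mul_zero]
  rw [hL, hR, sum_swap4]
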